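/- arXiv:1402.6595 — 6 statements merged into one kernel-verified Lean document; each statement's English description precedes it below -/
import Mathlib

section
/- Let δ > 0, σ > 1, and t ≥ 0. Then lim_{λ→+∞} λ^σ u_λ(t) = t/(2δ), where u_λ(t) is the solution with constant forcing term 1 and null initial data, defined for all λ large enough that δ²λ^{2σ} > λ. -/
open Filter

/-- `x₁(λ) = δλ^σ + (δ²λ^{2σ} − λ)^{1/2}`, minus the smaller root of
`x² + 2δλ^σ x + λ` in the supercritical regime. -/
noncomputable def x1 (δ σ lam : ℝ) : ℝ :=
  δ * lam ^ σ + (δ ^ 2 * lam ^ (2 * σ) - lam) ^ ((1 : ℝ) / 2)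

/-- `x₂(λ) = δλ^σ − (δ²λ^{2σ} − λ)^{1/2}`, minus the larger root of
`x² + 2δλ^σ x + λ` in the supercritical regime. -/
noncomputable def x2 (δ σ lam : ℝ) : ℝ :=
  δ * lam ^ σ - (δ ^ 2 * lam ^ (2 * σ) - lam) ^ ((1 : ℝ) / 2)

/-- The solution of `u'' + 2δλ^σ u' + λu = 1`, `u(0) = u'(0) = 0`. -/
noncomputable def uSol (δ σ lam t : ℝ) : ℝ :=
  1 / lam + (x2 δ σ lam * Real.exp (-(x1 δ σ lam) * t)
    - x1 δ σ lam * Real.exp (-(x2 δ σ lam) * t)) / (lam * (x1 δ σ lam - x2 δ σ lam))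

/-- The derivative of the above solution. -/
noncomputable def uDer (δ σ lam t : ℝ) : ℝ :=
  (Real.exp (-(x2 δ σ lam) * t) - Real.exp (-(x1 δ σ lam) * t))
    / (x1 δ σ lam - x2 δ σ lam)

lemma exp_neg_lb {y : ℝ} (hy : 0 ≤ y) : Real.exp (-y) ≤ 1 - y + y ^ 2 := by
  have h1 : y + 1 ≤ Real.exp y := Real.add_one_le_exp y
  have h3 : 0 < Real.exp (-y) := Real.exp_pos _
  have h4 : Real.exp (-y) * (y + 1) ≤ 1 := by
    calc Real.exp (-y) * (y + 1) ≤ Real.exp (-y) * Real.exp y :=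
          mul_le_mul_of_nonneg_left h1 h3.le
      _ = 1 := by rw [← Real.exp_add]; simp
  nlinarith [pow_nonneg hy 3]

/-- Key algebraic facts in the supercritical regime. -/
lemma key_facts (δ σ lam : ℝ) (hδ : 0 < δ) (hlam : 0 < lam)
    (hr : lam ^ (1 - 2*σ) < δ ^ 2) :
    0 < Real.sqrt (δ ^ 2 - lam ^ (1 - 2*σ)) ∧
    Real.sqrt (δ ^ 2 - lam ^ (1 - 2*σ)) < δ ∧
    x1 δ σ lam = lam ^ σ * (δ + Real.sqrt (δ ^ 2 - lam ^ (1 - 2*σ))) ∧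
    x2 δ σ lam = lam ^ σ * (δ - Real.sqrt (δ ^ 2 - lam ^ (1 - 2*σ))) ∧
    (δ - Real.sqrt (δ ^ 2 - lam ^ (1 - 2*σ))) * (δ + Real.sqrt (δ ^ 2 - lam ^ (1 - 2*σ)))
      = lam ^ (1 - 2*σ) := by
  set r := lam ^ (1 - 2*σ) with hrdef
  have hrpos : 0 < r := Real.rpow_pos_of_pos hlam _
  have hsub : 0 ≤ δ ^ 2 - r := by linarith
  set cc := Real.sqrt (δ ^ 2 - r) with hccdef
  have hcsq : cc ^ 2 = δ ^ 2 - r := Real.sq_sqrt hsub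
  have hcpos : 0 < cc := Real.sqrt_pos.2 (by linarith)
  have hclt : cc < δ := (Real.sqrt_lt' hδ).2 (by linarith)
  have hq : (δ ^ 2 * lam ^ (2 * σ) - lam) ^ ((1 : ℝ) / 2) = lam ^ σ * cc := by
    have h1 : δ ^ 2 * lam ^ (2 * σ) - lam = lam ^ (2 * σ) * (δ ^ 2 - r) := by
      have h1' : lam ^ (2 * σ) * r = lam := by
        rw [hrdef, ← Real.rpow_add hlam, show 2*σ + (1 - 2*σ) = (1:ℝ) by ring,
          Real.rpow_one]
      rw [mul_sub, h1']; ring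
    have h2 : lam ^ (2 * σ) = (lam ^ σ) ^ (2:ℕ) := by
      rw [← Real.rpow_natCast (lam ^ σ) 2, ← Real.rpow_mul hlam.le]
      norm_num [mul_comm]
    rw [h1, ← Real.sqrt_eq_rpow, Real.sqrt_mul (by positivity), h2,
      Real.sqrt_sq (by positivity)]
  refine ⟨hcpos, hclt, ?_, ?_, ?_⟩
  · rw [x1, hq]; ring
  · rw [x2, hq]; ring
  · nlinarith [hcsq]

lemma alg_identity (δ C L p E1 E2 : ℝ) (hL : L ≠ 0) (hC : C ≠ 0) (hp : p ≠ 0) :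
    p * (1 / L + (p * (δ - C) * E1 - p * (δ + C) * E2)
        / (L * (p * (δ + C) - p * (δ - C))))
      = p / L * (1 - E2) + p / L * ((δ - C) / (2 * C)) * (E1 - E2) := by
  rw [show p * (δ + C) - p * (δ - C) = p * (2 * C) by ring]
  field_simp
  ring

set_option maxHeartbeats 2000000 in
/-- for `δ > 0`, `σ > 1` and `t ≥ 0`, `λ^σ u_λ(t) → t/(2δ)` as `λ → +∞`. -/
theorem lam_pow_sigma_mul_uSol_tendsto (δ σ t : ℝ) (hδ : 0 < δ) (hσ : 1 < σ)
    (ht : 0 ≤ t) :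
    Tendsto (fun lam : ℝ => lam ^ σ * uSol δ σ lam t) atTop (nhds (t / (2 * δ))) := by
  have hσ0 : (0:ℝ) < σ := by linarith
  set c : ℝ → ℝ := fun lam => Real.sqrt (δ ^ 2 - lam ^ (1 - 2*σ)) with hcdef
  -- basic limits
  have h0 : Tendsto (fun lam : ℝ => lam ^ (1 - 2*σ)) atTop (nhds 0) := by
    have h := tendsto_rpow_neg_atTop (show (0:ℝ) < 2*σ - 1 by linarith)
    simpa [show -(2*σ - 1) = 1 - 2*σ by ring] using h
  have hc : Tendsto c atTop (nhds δ) := by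
    have h1 : Tendsto (fun lam : ℝ => δ ^ 2 - lam ^ (1 - 2*σ)) atTop (nhds (δ ^ 2)) := by
      simpa using tendsto_const_nhds.sub h0
    have h2 := (Real.continuous_sqrt.tendsto (δ ^ 2)).comp h1
    simpa [hcdef, Function.comp_def, Real.sqrt_sq hδ.le] using h2
  have hδc : Tendsto (fun lam => δ + c lam) atTop (nhds (2*δ)) := by
    have := (tendsto_const_nhds (x := δ) (f := atTop)).add hc
    simpa [two_mul] using this
  have hneg : Tendsto (fun lam : ℝ => lam ^ (-σ)) atTop (nhds 0) := tendsto_rpow_neg_atTop hσ0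
  have h1σ : Tendsto (fun lam : ℝ => lam ^ (1 - σ)) atTop (nhds 0) := by
    have h := tendsto_rpow_neg_atTop (show (0:ℝ) < σ - 1 by linarith)
    simpa [show -(σ - 1) = 1 - σ by ring] using h
  have h2δ : (2*δ) ≠ 0 := by positivity
  -- eventual regime
  have hev : ∀ᶠ lam : ℝ in atTop, 0 < lam ∧ lam ^ (1 - 2*σ) < δ ^ 2 :=
    (eventually_gt_atTop 0).and (h0.eventually_lt_const (by positivity))
  -- the two pieces
  set A : ℝ → ℝ := fun lam => lam ^ (σ - 1) * (1 - Real.exp (-(x2 δ σ lam) * t)) with hAdef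
  set B : ℝ → ℝ := fun lam =>
    lam ^ (σ - 1) * ((δ - c lam) / (2 * c lam)) *
      (Real.exp (-(x1 δ σ lam) * t) - Real.exp (-(x2 δ σ lam) * t)) with hBdef
  -- limit of A via squeeze
  have TA : Tendsto A atTop (nhds (t / (2*δ))) := by
    have Tupper : Tendsto (fun lam => t / (δ + c lam)) atTop (nhds (t / (2*δ))) :=
      tendsto_const_nhds.div hδc h2δ
    have Tsub : Tendsto (fun lam => t ^ 2 * lam ^ (1 - σ) / (δ + c lam) ^ 2) atTop
        (nhds 0) := by
      have := (tendsto_const_nhds (x := t ^ 2) (f := atTop)).mul h1σ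
      have h3 := this.div (hδc.pow 2) (by positivity : ((2*δ) ^ 2 : ℝ) ≠ 0)
      rw [mul_zero, zero_div] at h3
      exact h3
    have Tlower : Tendsto (fun lam => t / (δ + c lam) - t ^ 2 * lam ^ (1 - σ) / (δ + c lam) ^ 2)
        atTop (nhds (t / (2*δ))) := by
      simpa using Tupper.sub Tsub
    refine tendsto_of_tendsto_of_tendsto_of_le_of_le' Tlower Tupper ?_ ?_
    · filter_upwards [hev] with lam ⟨hlam, hr⟩
      obtain ⟨hcpos, hclt, hx1, hx2, hprod⟩ := key_facts δ σ lam hδ hlam hr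
      rw [show Real.sqrt (δ ^ 2 - lam ^ (1 - 2*σ)) = c lam from rfl] at hcpos hclt hx1 hx2 hprod
      have hδcpos : 0 < δ + c lam := by linarith
      have hppos : 0 < lam ^ (σ - 1) := Real.rpow_pos_of_pos hlam _
      have hx2v : x2 δ σ lam = lam ^ (1 - σ) / (δ + c lam) := by
        rw [hx2, eq_div_iff hδcpos.ne']
        have h5 : lam ^ σ * lam ^ (1 - 2*σ) = lam ^ (1 - σ) := by
          rw [← Real.rpow_add hlam, show σ + (1 - 2*σ) = 1 - σ by ring]
        linear_combination lam ^ σ * hprod + h5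
      have hx2pos : 0 < x2 δ σ lam := by rw [hx2v]; positivity
      have hy : 0 ≤ x2 δ σ lam * t := by positivity
      have hexp : Real.exp (-(x2 δ σ lam * t)) ≤ 1 - x2 δ σ lam * t + (x2 δ σ lam * t) ^ 2 :=
        exp_neg_lb hy
      have hcoef : lam ^ (σ - 1) * lam ^ (1 - σ) = 1 := by
        rw [← Real.rpow_add hlam, show σ - 1 + (1 - σ) = (0:ℝ) by ring, Real.rpow_zero]
      have hident1 : lam ^ (σ - 1) * (x2 δ σ lam * t) = t / (δ + c lam) := by
        rw [hx2v]
        calc lam ^ (σ - 1) * (lam ^ (1 - σ) / (δ + c lam) * t)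
            = (lam ^ (σ - 1) * lam ^ (1 - σ)) * t / (δ + c lam) := by ring
          _ = t / (δ + c lam) := by rw [hcoef]; ring
      have hident2 : lam ^ (σ - 1) * (x2 δ σ lam * t) ^ 2
          = t ^ 2 * lam ^ (1 - σ) / (δ + c lam) ^ 2 := by
        rw [hx2v]
        have h6 : lam ^ (σ - 1) * (lam ^ (1 - σ) * lam ^ (1 - σ)) = lam ^ (1 - σ) := by
          rw [← Real.rpow_add hlam, ← Real.rpow_add hlam,
            show σ - 1 + (1 - σ + (1 - σ)) = 1 - σ by ring]
        field_simp
        linear_combination t ^ 2 * hcoef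
      have hAeq : A lam = lam ^ (σ - 1) * (1 - Real.exp (-(x2 δ σ lam * t))) := by
        rw [hAdef, show -(x2 δ σ lam * t) = -(x2 δ σ lam) * t by ring]
      rw [hAeq, ← hident1, ← hident2]
      nlinarith [mul_le_mul_of_nonneg_left hexp hppos.le]
    · filter_upwards [hev] with lam ⟨hlam, hr⟩
      obtain ⟨hcpos, hclt, hx1, hx2, hprod⟩ := key_facts δ σ lam hδ hlam hr
      rw [show Real.sqrt (δ ^ 2 - lam ^ (1 - 2*σ)) = c lam from rfl] at hcpos hclt hx1 hx2 hprod
      have hδcpos : 0 < δ + c lam := by linarith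
      have hppos : 0 < lam ^ (σ - 1) := Real.rpow_pos_of_pos hlam _
      have hx2v : x2 δ σ lam = lam ^ (1 - σ) / (δ + c lam) := by
        rw [hx2, eq_div_iff hδcpos.ne']
        have h5 : lam ^ σ * lam ^ (1 - 2*σ) = lam ^ (1 - σ) := by
          rw [← Real.rpow_add hlam, show σ + (1 - 2*σ) = 1 - σ by ring]
        linear_combination lam ^ σ * hprod + h5
      have hcoef : lam ^ (σ - 1) * lam ^ (1 - σ) = 1 := by
        rw [← Real.rpow_add hlam, show σ - 1 + (1 - σ) = (0:ℝ) by ring, Real.rpow_zero]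
      have hident1 : lam ^ (σ - 1) * (x2 δ σ lam * t) = t / (δ + c lam) := by
        rw [hx2v]
        calc lam ^ (σ - 1) * (lam ^ (1 - σ) / (δ + c lam) * t)
            = (lam ^ (σ - 1) * lam ^ (1 - σ)) * t / (δ + c lam) := by ring
          _ = t / (δ + c lam) := by rw [hcoef]; ring
      have hexp : 1 - Real.exp (-(x2 δ σ lam * t)) ≤ x2 δ σ lam * t := by
        linarith [Real.add_one_le_exp (-(x2 δ σ lam * t))]
      have hAeq : A lam = lam ^ (σ - 1) * (1 - Real.exp (-(x2 δ σ lam * t))) := by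
        rw [hAdef, show -(x2 δ σ lam * t) = -(x2 δ σ lam) * t by ring]
      rw [hAeq, ← hident1]
      nlinarith [mul_le_mul_of_nonneg_left hexp hppos.le]
  -- limit of B via squeeze
  have TB : Tendsto B atTop (nhds 0) := by
    set M : ℝ → ℝ := fun lam => lam ^ (-σ) / ((δ + c lam) * (2 * c lam)) with hMdef
    have TM : Tendsto M atTop (nhds 0) := by
      have hden : Tendsto (fun lam => (δ + c lam) * (2 * c lam)) atTop
          (nhds ((2*δ) * (2*δ))) :=
        hδc.mul ((tendsto_const_nhds (x := (2:ℝ)) (f := atTop)).mul hc)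
      have := hneg.div hden (by positivity)
      rw [zero_div] at this
      exact this
    have TnegM : Tendsto (fun lam => -(M lam)) atTop (nhds 0) := by
      simpa using TM.neg
    have hside : ∀ᶠ lam : ℝ in atTop, -(M lam) ≤ B lam ∧ B lam ≤ M lam := by
      filter_upwards [hev] with lam ⟨hlam, hr⟩
      obtain ⟨hcpos, hclt, hx1, hx2, hprod⟩ := key_facts δ σ lam hδ hlam hr
      rw [show Real.sqrt (δ ^ 2 - lam ^ (1 - 2*σ)) = c lam from rfl] at hcpos hclt hx1 hx2 hprod
      have hδcpos : 0 < δ + c lam := by linarith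
      have hppos : 0 < lam ^ (σ - 1) := Real.rpow_pos_of_pos hlam _
      have hKeq : lam ^ (σ - 1) * ((δ - c lam) / (2 * c lam)) = M lam := by
        have h1 : lam ^ (σ - 1) * lam ^ (1 - 2*σ) = lam ^ (-σ) := by
          rw [← Real.rpow_add hlam, show σ - 1 + (1 - 2*σ) = -σ by ring]
        have hδmc : δ - c lam = lam ^ (1 - 2*σ) / (δ + c lam) := by
          rw [eq_div_iff hδcpos.ne']; exact hprod
        simp only [hMdef]
        rw [hδmc, ← h1]
        field_simp
      have hδmcpos : 0 ≤ δ - c lam := by linarith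
      have hx1pos : 0 < x1 δ σ lam := by rw [hx1]; positivity
      have hx2pos : 0 < x2 δ σ lam := by
        rw [hx2]
        have h7 : 0 < δ - c lam := by linarith
        positivity
      have hE1 : Real.exp (-(x1 δ σ lam) * t) ≤ 1 := by
        exact Real.exp_le_one_iff.2 (by nlinarith)
      have hE2 : Real.exp (-(x2 δ σ lam) * t) ≤ 1 := by
        exact Real.exp_le_one_iff.2 (by nlinarith)
      have hE1p : 0 < Real.exp (-(x1 δ σ lam) * t) := Real.exp_pos _
      have hE2p : 0 < Real.exp (-(x2 δ σ lam) * t) := Real.exp_pos _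
      have hMpos : 0 ≤ lam ^ (σ - 1) * ((δ - c lam) / (2 * c lam)) := by positivity
      have hBeq : B lam = lam ^ (σ - 1) * ((δ - c lam) / (2 * c lam)) *
          (Real.exp (-(x1 δ σ lam) * t) - Real.exp (-(x2 δ σ lam) * t)) := rfl
      have habs : ∀ K F1 F2 : ℝ, 0 ≤ K → F1 ≤ 1 → F2 ≤ 1 → 0 < F1 → 0 < F2 →
          -K ≤ K * (F1 - F2) ∧ K * (F1 - F2) ≤ K := by
        intro K F1 F2 hK hf1 hf2 hf3 hf4
        constructor <;> nlinarith
      obtain ⟨hL, hR⟩ := habs _ _ _ hMpos hE1 hE2 hE1p hE2p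
      exact ⟨by rw [hBeq, ← hKeq]; exact hL, by rw [hBeq, ← hKeq]; exact hR⟩
    exact tendsto_of_tendsto_of_tendsto_of_le_of_le' TnegM TM
      (hside.mono fun lam h => h.1) (hside.mono fun lam h => h.2)
  -- combine
  have Tsum : Tendsto (fun lam => A lam + B lam) atTop (nhds (t / (2*δ))) := by
    have h := TA.add TB
    rwa [add_zero] at h
  refine Tendsto.congr' ?_ Tsum
  filter_upwards [hev] with lam ⟨hlam, hr⟩
  obtain ⟨hcpos, hclt, hx1, hx2, hprod⟩ := key_facts δ σ lam hδ hlam hr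
  rw [show Real.sqrt (δ ^ 2 - lam ^ (1 - 2*σ)) = c lam from rfl] at hcpos hclt hx1 hx2 hprod
  have hδcpos : 0 < δ + c lam := by linarith
  have hppos : 0 < lam ^ σ := Real.rpow_pos_of_pos hlam _
  have hsm : lam ^ (σ - 1) = lam ^ σ / lam := by
    rw [eq_div_iff hlam.ne', ← Real.rpow_add_one hlam.ne' (σ - 1)]
    ring_nf
  have hAeq : A lam = lam ^ (σ - 1) * (1 - Real.exp (-(x2 δ σ lam) * t)) := rfl
  have hBeq : B lam = lam ^ (σ - 1) * ((δ - c lam) / (2 * c lam)) *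
      (Real.exp (-(x1 δ σ lam) * t) - Real.exp (-(x2 δ σ lam) * t)) := rfl
  rw [hAeq, hBeq, uSol, hx1, hx2, hsm]
  exact (alg_identity δ (c lam) lam (lam ^ σ) _ _ hlam.ne' hcpos.ne' hppos.ne').symm
end

section
/- Let δ > 0 and 1/2 < σ < 1, and let τ_λ := 1/x₂(λ) for λ large enough that δ²λ^{2σ} > λ. Then lim_{λ→+∞} λ u_λ(τ_λ) = 1 − e^{−1} and lim_{λ→+∞} λ^σ u_λ'(τ_λ) = e^{−1}/(2δ). -/
open Filter

/-- auxiliary: `r(λ) = √(1 − λ^{1−2σ}/δ²)`. -/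
noncomputable def rAux (δ σ lam : ℝ) : ℝ :=
  Real.sqrt (1 - lam ^ (1 - 2 * σ) / δ ^ 2)

/-- auxiliary: `E(λ) = exp(−(1+r)/(1−r))`. -/
noncomputable def eAux (δ σ lam : ℝ) : ℝ :=
  Real.exp (-((1 + rAux δ σ lam) / (1 - rAux δ σ lam)))

/-- for `δ > 0`, `1/2 < σ < 1` and `τ_λ := 1/x₂(λ)`, one has
`λ u_λ(τ_λ) → 1 − e^{−1}` and `λ^σ u_λ'(τ_λ) → e^{−1}/(2δ)` as `λ → +∞`. -/
theorem blowup_triple_supercritical (δ σ : ℝ) (hδ : 0 < δ) (hσ1 : 1 / 2 < σ)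
    (hσ2 : σ < 1) :
    Tendsto (fun lam : ℝ => lam * uSol δ σ lam (1 / x2 δ σ lam)) atTop
      (nhds (1 - Real.exp (-1))) ∧
    Tendsto (fun lam : ℝ => lam ^ σ * uDer δ σ lam (1 / x2 δ σ lam)) atTop
      (nhds (Real.exp (-1) / (2 * δ))) := by
  have hexp : (0 : ℝ) < 2 * σ - 1 := by linarith
  -- λ^{1−2σ} → 0
  have hq : Tendsto (fun lam : ℝ => lam ^ (1 - 2 * σ)) atTop (nhds 0) := by
    have := tendsto_rpow_neg_atTop hexp
    simpa [show -(2 * σ - 1) = 1 - 2 * σ by ring] using this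
  have hq' : Tendsto (fun lam : ℝ => lam ^ (1 - 2 * σ) / δ ^ 2) atTop (nhds 0) := by
    simpa using hq.div_const (δ ^ 2)
  -- r → 1
  have hr : Tendsto (rAux δ σ) atTop (nhds 1) := by
    have : Tendsto (fun lam : ℝ => 1 - lam ^ (1 - 2 * σ) / δ ^ 2) atTop (nhds 1) := by
      simpa using (tendsto_const_nhds (x := (1:ℝ))).sub hq'
    have := (Real.continuous_sqrt.tendsto 1).comp this
    rwa [Real.sqrt_one] at this
  -- eventual basic facts
  have hev : ∀ᶠ lam : ℝ in atTop, 0 < lam ∧ lam ^ (1 - 2 * σ) / δ ^ 2 < 1 := by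
    filter_upwards [eventually_gt_atTop (0 : ℝ),
      hq'.eventually (eventually_lt_nhds (show (0:ℝ) < 1 by norm_num))] with lam h1 h2
    exact ⟨h1, h2⟩
  -- eventually 0 < r < 1
  have hrev : ∀ᶠ lam : ℝ in atTop, 0 < rAux δ σ lam ∧ rAux δ σ lam < 1 := by
    filter_upwards [hev] with lam ⟨h1, h2⟩
    have ht : 0 < lam ^ (1 - 2 * σ) / δ ^ 2 :=
      div_pos (Real.rpow_pos_of_pos h1 _) (by positivity)
    constructor
    · exact Real.sqrt_pos.mpr (by linarith)
    · exact (Real.sqrt_lt' one_pos).mpr (by nlinarith)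
  -- 1 - r → 0 within Ioi 0
  have h1r : Tendsto (fun lam => 1 - rAux δ σ lam) atTop (nhdsWithin 0 (Set.Ioi 0)) := by
    rw [tendsto_nhdsWithin_iff]
    constructor
    · simpa using (tendsto_const_nhds (x := (1:ℝ))).sub hr
    · filter_upwards [hrev] with lam ⟨_, h2⟩
      simpa using h2
  -- (1+r)/(1-r) → ∞
  have hfrac : Tendsto (fun lam => (1 + rAux δ σ lam) / (1 - rAux δ σ lam)) atTop atTop := by
    have h1 : Tendsto (fun lam => 1 + rAux δ σ lam) atTop (nhds 2) := by
      have := (tendsto_const_nhds (x := (1:ℝ))).add hr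
      norm_num at this; exact this
    have h2 : Tendsto (fun lam => (1 - rAux δ σ lam)⁻¹) atTop atTop :=
      h1r.inv_tendsto_nhdsGT_zero
    simpa [div_eq_mul_inv] using Tendsto.pos_mul_atTop (by norm_num) h1 h2
  -- E → 0
  have hE : Tendsto (eAux δ σ) atTop (nhds 0) := by
    have := Real.tendsto_exp_neg_atTop_nhds_zero.comp hfrac
    exact this
  -- eventual equalities
  have heq : ∀ᶠ lam : ℝ in atTop,
      lam * uSol δ σ lam (1 / x2 δ σ lam)
        = 1 + ((1 - rAux δ σ lam) * eAux δ σ lam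
            - (1 + rAux δ σ lam) * Real.exp (-1)) / (2 * rAux δ σ lam) ∧
      lam ^ σ * uDer δ σ lam (1 / x2 δ σ lam)
        = (Real.exp (-1) - eAux δ σ lam) / (2 * δ * rAux δ σ lam) := by
    filter_upwards [hev, hrev] with lam ⟨hlam, hlt⟩ ⟨hr0, hr1⟩
    set r := rAux δ σ lam with hrdef
    have hlamsig : (0:ℝ) < lam ^ σ := Real.rpow_pos_of_pos hlam _
    have h2σ : lam ^ (2 * σ) = lam ^ σ * lam ^ σ := by
      rw [← Real.rpow_add hlam]; ring_nf
    have hprod : lam ^ (2 * σ) * lam ^ (1 - 2 * σ) = lam := by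
      rw [← Real.rpow_add hlam]; norm_num
    -- key factorization
    have h2σ' : lam ^ (2 * σ) = (lam ^ σ) ^ 2 := by rw [h2σ]; ring
    have hfac : δ ^ 2 * lam ^ (2 * σ) - lam
        = (δ * lam ^ σ) ^ 2 * (1 - lam ^ (1 - 2 * σ) / δ ^ 2) := by
      field_simp
      rw [← h2σ']
      linear_combination hprod
    have hs : (δ ^ 2 * lam ^ (2 * σ) - lam) ^ ((1:ℝ)/2) = δ * lam ^ σ * r := by
      rw [← Real.sqrt_eq_rpow, hfac, Real.sqrt_mul (sq_nonneg _),
        Real.sqrt_sq (mul_pos hδ hlamsig).le, hrdef, rAux]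
    have hx1 : x1 δ σ lam = δ * lam ^ σ * (1 + r) := by rw [x1, hs]; ring
    have hx2 : x2 δ σ lam = δ * lam ^ σ * (1 - r) := by rw [x2, hs]; ring
    have hx2pos : 0 < x2 δ σ lam := by
      rw [hx2]; exact mul_pos (mul_pos hδ hlamsig) (by linarith)
    have hx2ne : x2 δ σ lam ≠ 0 := ne_of_gt hx2pos
    have hτ2 : -(x2 δ σ lam) * (1 / x2 δ σ lam) = -1 := by
      field_simp
    have hτ1 : -(x1 δ σ lam) * (1 / x2 δ σ lam) = -((1 + r) / (1 - r)) := by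
      rw [hx1, hx2]
      have h1r' : (1:ℝ) - r ≠ 0 := by linarith
      field_simp
    have hdiff : x1 δ σ lam - x2 δ σ lam = δ * lam ^ σ * (2 * r) := by
      rw [hx1, hx2]; ring
    have hEeq : Real.exp (-(x1 δ σ lam) * (1 / x2 δ σ lam)) = eAux δ σ lam := by
      rw [hτ1, eAux]
    constructor
    · rw [uSol, hτ2, hEeq, hdiff, hx1, hx2]
      have hrne : r ≠ 0 := ne_of_gt hr0
      field_simp
    · rw [uDer, hτ2, hEeq, hdiff]
      have hrne : r ≠ 0 := ne_of_gt hr0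
      field_simp
  constructor
  · refine Tendsto.congr' (heq.mono fun lam h => (h.1).symm) ?_
    have hlim : Tendsto (fun lam => 1 + ((1 - rAux δ σ lam) * eAux δ σ lam
        - (1 + rAux δ σ lam) * Real.exp (-1)) / (2 * rAux δ σ lam)) atTop
        (nhds (1 + ((1 - 1) * 0 - (1 + 1) * Real.exp (-1)) / (2 * 1))) := by
      apply tendsto_const_nhds.add
      apply Tendsto.div
      · exact (((tendsto_const_nhds.sub hr).mul hE).sub
          ((tendsto_const_nhds.add hr).mul tendsto_const_nhds))
      · exact tendsto_const_nhds.mul hr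
      · norm_num
    convert hlim using 2
    ring
  · refine Tendsto.congr' (heq.mono fun lam h => (h.2).symm) ?_
    have hlim : Tendsto (fun lam => (Real.exp (-1) - eAux δ σ lam) / (2 * δ * rAux δ σ lam))
        atTop (nhds ((Real.exp (-1) - 0) / (2 * δ * 1))) := by
      apply Tendsto.div
      · exact tendsto_const_nhds.sub hE
      · exact tendsto_const_nhds.mul hr
      · positivity
    convert hlim using 2 <;> ring
end

section
/- Let σ = 1/2 and δ > 1, let D := (δ + (δ² − 1)^{1/2})², and let τ_λ := 1/x₂(λ). Then for every λ > 0 one has x₁(λ) = (δ + (δ² − 1)^{1/2})λ^{1/2}, x₂(λ) = (δ − (δ² − 1)^{1/2})λ^{1/2}, λ u_λ(τ_λ) = 1 + (e^{−D} − D e^{−1})/(D − 1), and λ^{1/2} u_λ'(τ_λ) = (e^{−1} − e^{−D})/(2(δ² − 1)^{1/2}); in particular both quantities are independent of λ. -/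
open Filter

/-- for `σ = 1/2` and `δ > 1`, with `D := (δ + (δ²−1)^{1/2})²` and
`τ_λ := 1/x₂(λ)`, for every `λ > 0` one has explicit formulas for `x₁(λ)`, `x₂(λ)`,
and `λ u_λ(τ_λ)`, `λ^{1/2} u_λ'(τ_λ)` are constants independent of `λ`. -/
theorem blowup_triple_critical_sigma_half (δ : ℝ) (hδ : 1 < δ) :
    ∀ lam : ℝ, 0 < lam →
      x1 δ (1 / 2) lam = (δ + (δ ^ 2 - 1) ^ ((1 : ℝ) / 2)) * lam ^ ((1 : ℝ) / 2) ∧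
      x2 δ (1 / 2) lam = (δ - (δ ^ 2 - 1) ^ ((1 : ℝ) / 2)) * lam ^ ((1 : ℝ) / 2) ∧
      lam * uSol δ (1 / 2) lam (1 / x2 δ (1 / 2) lam) =
        1 + (Real.exp (-((δ + (δ ^ 2 - 1) ^ ((1 : ℝ) / 2)) ^ 2))
          - (δ + (δ ^ 2 - 1) ^ ((1 : ℝ) / 2)) ^ 2 * Real.exp (-1))
          / ((δ + (δ ^ 2 - 1) ^ ((1 : ℝ) / 2)) ^ 2 - 1) ∧
      lam ^ ((1 : ℝ) / 2) * uDer δ (1 / 2) lam (1 / x2 δ (1 / 2) lam) =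
        (Real.exp (-1) - Real.exp (-((δ + (δ ^ 2 - 1) ^ ((1 : ℝ) / 2)) ^ 2)))
          / (2 * (δ ^ 2 - 1) ^ ((1 : ℝ) / 2)) := by

  intro lam hlam
  have h1 : (0:ℝ) < δ ^ 2 - 1 := by nlinarith
  set s := (δ ^ 2 - 1) ^ ((1:ℝ)/2) with hs
  have hspos : 0 < s := Real.rpow_pos_of_pos h1 _
  have hs2 : s ^ 2 = δ ^ 2 - 1 := by
    rw [hs, ← Real.rpow_natCast ((δ ^ 2 - 1) ^ ((1:ℝ)/2)) 2, ← Real.rpow_mul h1.le]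
    norm_num
  have hds : 0 < δ - s := by nlinarith
  have hL : (0:ℝ) < lam ^ ((1:ℝ)/2) := Real.rpow_pos_of_pos hlam _
  set L := lam ^ ((1:ℝ)/2) with hLdef
  have hL2 : L ^ 2 = lam := by
    rw [hLdef, ← Real.rpow_natCast (lam ^ ((1:ℝ)/2)) 2, ← Real.rpow_mul hlam.le]
    norm_num
  have hroot : (δ ^ 2 * lam ^ (2 * ((1:ℝ)/2)) - lam) ^ ((1:ℝ)/2) = s * L := by
    have e1 : lam ^ (2 * ((1:ℝ)/2)) = lam := by
      norm_num
    rw [e1]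
    have e2 : δ ^ 2 * lam - lam = (δ ^ 2 - 1) * lam := by ring
    rw [e2, Real.mul_rpow h1.le hlam.le]
  have hx1 : x1 δ (1/2) lam = (δ + s) * L := by
    rw [x1, hroot]; ring
  have hx2 : x2 δ (1/2) lam = (δ - s) * L := by
    rw [x2, hroot]; ring
  have hx2pos : 0 < (δ - s) * L := mul_pos hds hL
  have hdspos : 0 < δ + s := by nlinarith
  have hone : (δ + s) * (δ - s) = 1 := by nlinarith [hs2]
  have hA : -(x1 δ (1/2) lam) * (1 / x2 δ (1/2) lam) = -((δ + s) ^ 2) := by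
    rw [hx1, hx2]
    field_simp
    linear_combination hone
  have hB : -(x2 δ (1/2) lam) * (1 / x2 δ (1/2) lam) = -1 := by
    rw [hx2]
    field_simp
  have hdiff : x1 δ (1/2) lam - x2 δ (1/2) lam = 2 * s * L := by
    rw [hx1, hx2]; ring
  have hD1 : (δ + s) ^ 2 - 1 = (δ + s) * (2 * s) := by linear_combination hone
  refine ⟨hx1, hx2, ?_, ?_⟩
  · rw [uSol, hA, hB, hdiff, hx1, hx2, hD1]
    have h2s : (2:ℝ) * s ≠ 0 := by positivity
    field_simp
    linear_combination Real.exp (-((δ + s) ^ 2)) * hone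
  · rw [uDer, hA, hB, hdiff]
    rw [mul_div_assoc', mul_comm (2 * s) L]
    exact mul_div_mul_left _ _ (ne_of_gt hL)
end

section
/- Let δ > 0 and σ ≥ 1. Then lim_{λ→+∞} λ^σ (e^{−x₂(λ)/x₁(λ)} − e^{−1})/(x₁(λ) − x₂(λ)) = (1 − e^{−1})/(2δ); that is, with τ_λ := 1/x₁(λ), one has lim_{λ→+∞} λ^σ u_λ'(τ_λ) = (1 − e^{−1})/(2δ), and in particular this limit is finite and positive. -/
open Filter

/-- for `δ > 0` and `σ ≥ 1`,
`λ^σ (e^{−x₂(λ)/x₁(λ)} − e^{−1})/(x₁(λ) − x₂(λ)) → (1 − e^{−1})/(2δ)`, i.e. with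
`τ_λ := 1/x₁(λ)` one has `λ^σ u_λ'(τ_λ) → (1 − e^{−1})/(2δ)`, a finite positive limit. -/
theorem derivative_blowup_pair (δ σ : ℝ) (hδ : 0 < δ) (hσ : 1 ≤ σ) :
    Tendsto (fun lam : ℝ =>
        lam ^ σ * (Real.exp (-(x2 δ σ lam) / x1 δ σ lam) - Real.exp (-1))
          / (x1 δ σ lam - x2 δ σ lam)) atTop
      (nhds ((1 - Real.exp (-1)) / (2 * δ))) ∧
    Tendsto (fun lam : ℝ => lam ^ σ * uDer δ σ lam (1 / x1 δ σ lam)) atTop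
      (nhds ((1 - Real.exp (-1)) / (2 * δ))) ∧
    0 < (1 - Real.exp (-1)) / (2 * δ) := by
  set w : ℝ → ℝ := fun lam => Real.sqrt (δ ^ 2 - lam ^ (1 - 2 * σ)) with hwdef
  -- lam ^ (1 - 2σ) → 0
  have h0 : Tendsto (fun lam : ℝ => lam ^ (1 - 2 * σ)) atTop (nhds 0) := by
    have := tendsto_rpow_neg_atTop (y := 2 * σ - 1) (by linarith)
    simpa [neg_sub] using this
  have hw : Tendsto w atTop (nhds δ) := by
    have h1 : Tendsto (fun lam : ℝ => δ ^ 2 - lam ^ (1 - 2 * σ)) atTop (nhds (δ ^ 2)) := by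
      simpa using tendsto_const_nhds.sub h0
    have := (Real.continuous_sqrt.tendsto (δ ^ 2)).comp h1
    simpa [hwdef, Real.sqrt_sq hδ.le, Function.comp_def] using this
  -- eventual facts
  have hev : ∀ᶠ lam : ℝ in atTop, lam ^ (1 - 2 * σ) ≤ δ ^ 2 / 2 ∧ 0 < lam := by
    filter_upwards [h0.eventually_lt_const (show (0:ℝ) < δ ^ 2 / 2 by positivity),
      eventually_gt_atTop 0] with lam h1 h2
    exact ⟨h1.le, h2⟩
  -- key eventual identity facts
  have key : ∀ᶠ lam : ℝ in atTop,
      x1 δ σ lam = lam ^ σ * (δ + w lam) ∧ x2 δ σ lam = lam ^ σ * (δ - w lam)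
        ∧ 0 < lam ^ σ ∧ 0 < w lam := by
    filter_upwards [hev] with lam ⟨h1, h2⟩
    have hps : (0:ℝ) < lam ^ σ := Real.rpow_pos_of_pos h2 σ
    have hwnn : (0:ℝ) < δ ^ 2 - lam ^ (1 - 2 * σ) := by nlinarith [sq_nonneg δ]
    have hwp : 0 < w lam := Real.sqrt_pos.mpr hwnn
    have hsplit : δ ^ 2 * lam ^ (2 * σ) - lam
        = lam ^ (2 * σ) * (δ ^ 2 - lam ^ (1 - 2 * σ)) := by
      have : lam ^ (2 * σ) * lam ^ (1 - 2 * σ) = lam := by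
        rw [← Real.rpow_add h2]; norm_num
      nlinarith [this]
    have hsq : (δ ^ 2 * lam ^ (2 * σ) - lam) ^ ((1:ℝ) / 2) = lam ^ σ * w lam := by
      rw [hsplit, Real.mul_rpow (Real.rpow_nonneg h2.le _) hwnn.le,
        ← Real.rpow_mul h2.le, show 2 * σ * ((1:ℝ)/2) = σ by ring]
      simp [hwdef, Real.sqrt_eq_rpow]
    constructor
    · rw [x1, hsq]; ring
    refine ⟨by rw [x2, hsq]; ring, hps, hwp⟩
  -- the comparison function and its limit
  have hG : Tendsto (fun lam : ℝ =>
      (Real.exp (-(δ - w lam) / (δ + w lam)) - Real.exp (-1)) / (2 * w lam)) atTop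
      (nhds ((1 - Real.exp (-1)) / (2 * δ))) := by
    have hinner : Tendsto (fun lam : ℝ => -(δ - w lam) / (δ + w lam)) atTop (nhds 0) := by
      have ha : Tendsto (fun lam : ℝ => -(δ - w lam)) atTop (nhds (-(δ - δ))) :=
        (tendsto_const_nhds.sub hw).neg
      have hb : Tendsto (fun lam : ℝ => δ + w lam) atTop (nhds (δ + δ)) :=
        tendsto_const_nhds.add hw
      have := ha.div hb (show δ + δ ≠ 0 by positivity)
      simp only [sub_self, neg_zero, zero_div] at this
      exact this
    have hnum : Tendsto (fun lam : ℝ =>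
        Real.exp (-(δ - w lam) / (δ + w lam)) - Real.exp (-1)) atTop
        (nhds (1 - Real.exp (-1))) := by
      have := (Real.continuous_exp.tendsto 0).comp hinner
      simpa using this.sub (tendsto_const_nhds (x := Real.exp (-1)))
    exact hnum.div (tendsto_const_nhds.mul hw) (by positivity)
  have heq1 : (fun lam : ℝ =>
      (Real.exp (-(δ - w lam) / (δ + w lam)) - Real.exp (-1)) / (2 * w lam)) =ᶠ[atTop]
      fun lam : ℝ => lam ^ σ * (Real.exp (-(x2 δ σ lam) / x1 δ σ lam) - Real.exp (-1))
        / (x1 δ σ lam - x2 δ σ lam) := by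
    filter_upwards [key] with lam ⟨hx1, hx2, hps, hwp⟩
    rw [hx1, hx2]
    have hd : -(lam ^ σ * (δ - w lam)) / (lam ^ σ * (δ + w lam))
        = -(δ - w lam) / (δ + w lam) := by
      rw [neg_div, neg_div, mul_div_mul_left _ _ hps.ne']
    rw [hd]
    have : lam ^ σ * (δ + w lam) - lam ^ σ * (δ - w lam) = lam ^ σ * (2 * w lam) := by ring
    rw [this, mul_div_mul_left _ _ hps.ne']
  have T1 : Tendsto (fun lam : ℝ =>
      lam ^ σ * (Real.exp (-(x2 δ σ lam) / x1 δ σ lam) - Real.exp (-1))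
        / (x1 δ σ lam - x2 δ σ lam)) atTop (nhds ((1 - Real.exp (-1)) / (2 * δ))) :=
    hG.congr' heq1
  refine ⟨T1, ?_, ?_⟩
  · refine T1.congr' ?_
    filter_upwards [key] with lam ⟨hx1, hx2, hps, hwp⟩
    have hx1p : 0 < x1 δ σ lam := by rw [hx1]; positivity
    have e1 : -x1 δ σ lam * (1 / x1 δ σ lam) = -1 := by
      field_simp
    have e2 : -x2 δ σ lam * (1 / x1 δ σ lam) = -x2 δ σ lam / x1 δ σ lam := by
      ring
    rw [uDer, e1, e2, mul_div_assoc']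
  · have h : Real.exp (-1) < 1 := by
      have := Real.exp_lt_exp.mpr (show (-1:ℝ) < 0 by norm_num)
      rwa [Real.exp_zero] at this
    exact div_pos (by linarith) (by positivity)
end

section
/- Let (α_n)_{n∈ℕ} be a sequence of positive real numbers with α_n → 0 as n → +∞. Then there exist a strictly increasing sequence (k_n)_{n≥1} of natural numbers and a strictly increasing sequence (T_n)_{n≥0} of nonnegative real numbers with T₀ = 0 such that α_{k_n} ∫_{T_{n−1}}^{T_n} e^{−α_{k_n} x} dx ≥ e^{−1}(1 − e^{−1}) for every n ≥ 1. -/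
open Real intervalIntegral

lemma integral_exp_neg_mul (c a b : ℝ) (hc : c ≠ 0) :
    ∫ x in a..b, Real.exp (-c * x) = (Real.exp (-c * a) - Real.exp (-c * b)) / c := by
  have h : (-c : ℝ) ≠ 0 := neg_ne_zero.2 hc
  rw [intervalIntegral.integral_comp_mul_left (fun x => Real.exp x) h,
    integral_exp]
  field_simp
  ring_nf
  field_simp

/-- preliminary integral estimate: given positive `α_n → 0`, there are a
strictly increasing sequence `k_n` of indices and an increasing sequence of times
`T_n` with `T_0 = 0` such that
`α_{k_n} ∫_{T_{n−1}}^{T_n} e^{−α_{k_n}x} dx ≥ e^{−1}(1 − e^{−1})` for all `n ≥ 1`. -/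
theorem preliminary_integral_estimate (α : ℕ → ℝ) (hpos : ∀ n, 0 < α n)
    (hlim : Filter.Tendsto α Filter.atTop (nhds 0)) :
    ∃ (k : ℕ → ℕ) (T : ℕ → ℝ), StrictMono k ∧ StrictMono T ∧ T 0 = 0 ∧
      ∀ n : ℕ, 1 ≤ n →
        Real.exp (-1) * (1 - Real.exp (-1)) ≤
          α (k n) * ∫ x in (T (n - 1))..(T n), Real.exp (-(α (k n)) * x) := by
  -- key selection: for any N and t ≥ 0 there is j > N with α j * (t+1) ≤ 1
  have key : ∀ (N : ℕ) (t : ℝ), 0 ≤ t → ∃ j, N < j ∧ α j * (t + 1) ≤ 1 := by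
    intro N t ht
    have hpos' : (0:ℝ) < 1 / (t + 1) := by positivity
    have := (Metric.tendsto_atTop.1 hlim) (1 / (t + 1)) hpos'
    obtain ⟨M, hM⟩ := this
    refine ⟨max M (N + 1), lt_of_lt_of_le (Nat.lt_succ_self N) (le_max_right _ _), ?_⟩
    have h1 := hM (max M (N + 1)) (le_max_left _ _)
    rw [Real.dist_eq, sub_zero, abs_of_pos (hpos _)] at h1
    have ht1 : (0:ℝ) < t + 1 := by linarith
    calc α (max M (N + 1)) * (t + 1) ≤ (1 / (t + 1)) * (t + 1) := by
          exact mul_le_mul_of_nonneg_right h1.le ht1.le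
      _ = 1 := by field_simp
  -- recursively define pairs (k n, T n)
  choose F hF1 hF2 using fun p : ℕ × {t : ℝ // 0 ≤ t} => key p.1 p.2.1 p.2.2
  let g : ℕ → ℕ × {t : ℝ // 0 ≤ t} := fun n =>
    Nat.rec (0, ⟨0, le_refl 0⟩)
      (fun _ p => (F p, ⟨p.2.1 + 1 / α (F p), add_nonneg p.2.2 (le_of_lt (div_pos one_pos (hpos _)))⟩)) n
  set k : ℕ → ℕ := fun n => (g n).1 with hk
  set T : ℕ → ℝ := fun n => ((g n).2 : ℝ) with hT
  have hstep : ∀ n, k (n + 1) = F (g n) ∧ T (n + 1) = T n + 1 / α (k (n + 1)) := by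
    intro n; exact ⟨rfl, rfl⟩
  have hklt : ∀ n, k n < k (n + 1) := fun n => (hstep n).1 ▸ hF1 (g n)
  have hsmall : ∀ n, α (k (n + 1)) * (T n + 1) ≤ 1 := fun n => by
    have := hF2 (g n); rw [← (hstep n).1] at this; exact this
  have hTpos : ∀ n, 0 ≤ T n := fun n => (g n).2.2
  have hTlt : ∀ n, T n < T (n + 1) := by
    intro n
    rw [(hstep n).2]
    have := hpos (k (n + 1))
    have : 0 < 1 / α (k (n + 1)) := by positivity
    linarith
  refine ⟨k, T, strictMono_nat_of_lt_succ hklt, strictMono_nat_of_lt_succ hTlt, rfl, ?_⟩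
  intro n hn
  obtain ⟨m, rfl⟩ := Nat.exists_eq_add_of_lt (Nat.lt_of_lt_of_le Nat.zero_lt_one hn)
  simp only [Nat.zero_add, Nat.add_sub_cancel]
  set c := α (k (m + 1)) with hc
  have hcpos : 0 < c := hpos _
  rw [integral_exp_neg_mul c _ _ hcpos.ne', (hstep m).2]
  simp only [← hc]
  have hab : c * (T m + 1 / c) = c * T m + 1 := by field_simp
  have hred : c * ((Real.exp (-c * T m) - Real.exp (-c * (T m + 1 / c))) / c)
      = Real.exp (-c * T m) - Real.exp (-c * (T m + 1 / c)) := by field_simp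
  rw [hred]
  have h1 : c * T m ≤ 1 := by
    have := hsmall m
    have hc1 : c * T m + c ≤ 1 := by rw [hc]; nlinarith [this]
    linarith [hcpos]
  have h2 : Real.exp (-1) ≤ Real.exp (-(c * T m)) :=
    Real.exp_le_exp.2 (by linarith)
  have h3 : Real.exp (-(c * (T m + 1 / c))) = Real.exp (-(c * T m)) * Real.exp (-1) := by
    rw [← Real.exp_add]; congr 1; rw [hab]; ring
  rw [neg_mul, neg_mul, h3]
  have h4 : Real.exp (-(c * T m)) - Real.exp (-(c * T m)) * Real.exp (-1)
      = Real.exp (-(c * T m)) * (1 - Real.exp (-1)) := by ring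
  rw [h4]
  have h5 : 0 ≤ 1 - Real.exp (-1) := by
    have : Real.exp (-1) ≤ 1 := Real.exp_le_one_iff.2 (by norm_num)
    linarith
  exact mul_le_mul_of_nonneg_right h2 h5
end

section
/- Let δ > 0, σ ≥ 0, μ > 0, T > 0, let f : [0,T] → ℝ be continuous, and let u : [0,T] → ℝ be twice continuously differentiable with u(0) = u'(0) = 0 and u''(t) + 2δμ^σ u'(t) + μ u(t) = f(t) for every t ∈ [0,T]. Then for every t ∈ [0,T]: μ^σ u'(t)² + μ^{σ+1} u(t)² + 3δ ∫₀ᵗ μ^{2σ} u'(s)² ds ≤ (1/δ) ∫₀ᵗ f(s)² ds. -/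
open Set

/-- single-mode energy estimate: if `u'' + 2δμ^σ u' + μu = f` on `[0,T]`
with `u(0) = u'(0) = 0`, then for every `t ∈ [0,T]`,
`μ^σ u'(t)² + μ^{σ+1} u(t)² + 3δ∫₀ᵗ μ^{2σ} u'(s)² ds ≤ (1/δ)∫₀ᵗ f(s)² ds`. -/
theorem single_mode_energy_estimate (δ σ μ T : ℝ) (hδ : 0 < δ) (hσ : 0 ≤ σ)
    (hμ : 0 < μ) (hT : 0 < T) (f u u' u'' : ℝ → ℝ)
    (hf : ContinuousOn f (Icc 0 T))
    (hu' : ∀ t ∈ Icc (0 : ℝ) T, HasDerivWithinAt u (u' t) (Icc 0 T) t)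
    (hu'' : ∀ t ∈ Icc (0 : ℝ) T, HasDerivWithinAt u' (u'' t) (Icc 0 T) t)
    (hu''cont : ContinuousOn u'' (Icc 0 T))
    (h0 : u 0 = 0) (h0' : u' 0 = 0)
    (heq : ∀ t ∈ Icc (0 : ℝ) T, u'' t + 2 * δ * μ ^ σ * u' t + μ * u t = f t) :
    ∀ t ∈ Icc (0 : ℝ) T,
      μ ^ σ * u' t ^ 2 + μ ^ (σ + 1) * u t ^ 2
          + 3 * δ * ∫ s in (0 : ℝ)..t, μ ^ (2 * σ) * u' s ^ 2
        ≤ (1 / δ) * ∫ s in (0 : ℝ)..t, f s ^ 2 := by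
  have hT0 : (0 : ℝ) ≤ T := hT.le
  have huIcc : uIcc (0 : ℝ) T = Icc 0 T := uIcc_of_le hT0
  have hucont : ContinuousOn u (Icc 0 T) := fun x hx => (hu' x hx).continuousWithinAt
  have hu'cont : ContinuousOn u' (Icc 0 T) := fun x hx => (hu'' x hx).continuousWithinAt
  set g : ℝ → ℝ := fun s => μ ^ (2 * σ) * u' s ^ 2 with hgdef
  set h : ℝ → ℝ := fun s => f s ^ 2 with hhdef
  have hgcont : ContinuousOn g (Icc 0 T) := continuousOn_const.mul (hu'cont.pow 2)
  have hhcont : ContinuousOn h (Icc 0 T) := hf.pow 2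
  have hgint : IntervalIntegrable g MeasureTheory.volume 0 T := by
    rw [← huIcc] at hgcont; exact hgcont.intervalIntegrable
  have hhint : IntervalIntegrable h MeasureTheory.volume 0 T := by
    rw [← huIcc] at hhcont; exact hhcont.intervalIntegrable
  set G : ℝ → ℝ := fun t => μ ^ σ * u' t ^ 2 + μ ^ (σ + 1) * u t ^ 2
      + 3 * δ * (∫ s in (0 : ℝ)..t, g s) - (1 / δ) * (∫ s in (0 : ℝ)..t, h s) with hGdef
  set G' : ℝ → ℝ := fun x => μ ^ σ * (2 * u' x ^ 1 * u'' x)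
      + μ ^ (σ + 1) * (2 * u x ^ 1 * u' x) + 3 * δ * g x - (1 / δ) * h x with hG'def
  -- continuity of G on Icc 0 T
  have hGcont : ContinuousOn G (Icc 0 T) := by
    simp only [hGdef]
    apply ContinuousOn.sub
    · apply ContinuousOn.add
      · exact (continuousOn_const.mul (hu'cont.pow 2)).add
          (continuousOn_const.mul (hucont.pow 2))
      · refine continuousOn_const.mul ?_
        have := intervalIntegral.continuousOn_primitive_interval'
          (μ := MeasureTheory.volume) hgint (a := 0) (by rw [huIcc]; exact ⟨le_rfl, hT0⟩)
        rwa [huIcc] at this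
    · refine continuousOn_const.mul ?_
      have := intervalIntegral.continuousOn_primitive_interval'
        (μ := MeasureTheory.volume) hhint (a := 0) (by rw [huIcc]; exact ⟨le_rfl, hT0⟩)
      rwa [huIcc] at this
  -- derivative of G on the interior
  have hGderiv : ∀ x ∈ interior (Icc (0 : ℝ) T),
      HasDerivWithinAt G (G' x) (interior (Icc (0 : ℝ) T)) x := by
    rw [interior_Icc]
    intro x hx
    have hxIcc : x ∈ Icc (0 : ℝ) T := Ioo_subset_Icc_self hx
    have hnhds : Icc (0 : ℝ) T ∈ nhds x := Icc_mem_nhds hx.1 hx.2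
    have hint : ∀ {k : ℝ → ℝ}, ContinuousOn k (Icc 0 T) →
        HasDerivAt (fun b => ∫ s in (0 : ℝ)..b, k s) (k x) x := by
      intro k hk
      refine intervalIntegral.integral_hasDerivAt_right ?_ ?_ (hk.continuousAt hnhds)
      · have h1 : ContinuousOn k (uIcc 0 x) := hk.mono (by
          rw [uIcc_of_le hxIcc.1]; exact Icc_subset_Icc le_rfl hxIcc.2)
        exact h1.intervalIntegrable
      · exact ContinuousOn.stronglyMeasurableAtFilter isOpen_Ioo
          (hk.mono Ioo_subset_Icc_self) x hx
    have h1 : HasDerivAt (fun b => ∫ s in (0 : ℝ)..b, g s) (g x) x := hint hgcont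
    have h2 : HasDerivAt (fun b => ∫ s in (0 : ℝ)..b, h s) (h x) x := hint hhcont
    have hu'x : HasDerivWithinAt u (u' x) (Ioo 0 T) x :=
      (hu' x hxIcc).mono Ioo_subset_Icc_self
    have hu''x : HasDerivWithinAt u' (u'' x) (Ioo 0 T) x :=
      (hu'' x hxIcc).mono Ioo_subset_Icc_self
    have H := ((((hu''x.pow 2).const_mul (μ ^ σ)).add
        ((hu'x.pow 2).const_mul (μ ^ (σ + 1)))).add
        ((h1.hasDerivWithinAt.const_mul (3 * δ)))).sub
        (h2.hasDerivWithinAt.const_mul (1 / δ))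
    convert H using 1
    · rfl
    · rfl
    · rfl
    · simp [hG'def]
  -- the derivative is nonpositive
  have hG'nonpos : ∀ x ∈ interior (Icc (0 : ℝ) T), G' x ≤ 0 := by
    rw [interior_Icc]
    intro x hx
    have hxIcc : x ∈ Icc (0 : ℝ) T := Ioo_subset_Icc_self hx
    have he : u'' x = f x - 2 * δ * μ ^ σ * u' x - μ * u x := by
      have := heq x hxIcc; linarith
    have hσ1 : μ ^ (σ + 1) = μ ^ σ * μ := by
      rw [Real.rpow_add hμ, Real.rpow_one]
    have h2σ : μ ^ (2 * σ) = μ ^ σ * μ ^ σ := by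
      rw [two_mul, Real.rpow_add hμ]
    simp only [hG'def, hgdef, hhdef, he, hσ1, h2σ, pow_one]
    have key := sq_nonneg (δ * (μ ^ σ * u' x) - f x)
    have hm : (0 : ℝ) < μ ^ σ := Real.rpow_pos_of_pos hμ σ
    have hδ' : (0 : ℝ) < δ := hδ
    rw [sub_nonpos, div_mul_eq_mul_div, le_div_iff₀ hδ']
    nlinarith [key]
  have hanti : AntitoneOn G (Icc 0 T) :=
    antitoneOn_of_hasDerivWithinAt_nonpos (convex_Icc 0 T) hGcont hGderiv hG'nonpos
  intro t ht
  have hGt : G t ≤ G 0 := hanti ⟨le_rfl, hT0⟩ ht ht.1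
  have hG0 : G 0 = 0 := by
    simp [hGdef, h0, h0', intervalIntegral.integral_same]
  rw [hG0] at hGt
  simp only [hGdef] at hGt
  simp only [hgdef, hhdef] at hGt ⊢
  linarith
end
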